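/- Let U_t ≥ 0 with Σ U_t = 0 (noiseless) or more generally with U_Σ < 1 and U_t = O(t^{−ξ_U}), and suppose V_t = C_V t^{−ξ_V}(1 + o(1)) with ξ_U > max(ξ_V, 1). Then L_t = ½ Σ_{s=1}^t ((1−𝕌)^{-1})_s V_{t−s+1} satisfies L_t = (C_V / (2(1 − U_Σ))) t^{−ξ_V} (1 + o(1)) as t → ∞. -/

import Mathlib

open Finset Filter

namespace Stmt12

noncomputable def res (U : ℕ → ℝ) : ℕ → ℝ
  | 0 => 1
  | (t+1) => ∑ s ∈ (Finset.Icc 1 (t+1)).attach, U s.1 * res U (t+1 - s.1)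
  decreasing_by
    have h := (Finset.mem_Icc.mp s.2).1
    omega

lemma res_zero (U : ℕ → ℝ) : res U 0 = 1 := by rw [res]

lemma res_eq (U : ℕ → ℝ) {t : ℕ} (ht : 1 ≤ t) :
    res U t = ∑ s ∈ Finset.Icc 1 t, U s * res U (t - s) := by
  obtain ⟨t', rfl⟩ : ∃ t', t = t' + 1 := ⟨t - 1, by omega⟩
  rw [res]
  exact Finset.sum_attach (Finset.Icc 1 (t' + 1)) (fun s => U s * res U (t' + 1 - s))

lemma res_nonneg (U : ℕ → ℝ) (hUnn : ∀ t, 0 ≤ U t) : ∀ t, 0 ≤ res U t := by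
  intro t
  induction t using Nat.strong_induction_on with
  | _ t ih =>
    rcases Nat.eq_zero_or_pos t with rfl | ht
    · rw [res_zero]; norm_num
    · rw [res_eq U ht]
      refine Finset.sum_nonneg fun s hs => ?_
      have h1 := (Finset.mem_Icc.mp hs).1
      exact mul_nonneg (hUnn s) (ih (t - s) (by omega))

lemma swap_tri (F : ℕ → ℕ → ℝ) (N : ℕ) :
    ∑ t ∈ Finset.Icc 1 N, ∑ s ∈ Finset.Icc 1 t, F t s
      = ∑ s ∈ Finset.Icc 1 N, ∑ t ∈ Finset.Icc s N, F t s :=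
  Finset.sum_comm' (by intro x y; simp only [Finset.mem_Icc]; omega)

lemma sum_shift (f : ℕ → ℝ) (s N : ℕ) :
    ∑ t ∈ Finset.Icc s N, f (t - s) = ∑ j ∈ Finset.range (N + 1 - s), f j := by
  rw [← Finset.Ico_add_one_right_eq_Icc, Finset.sum_Ico_eq_sum_range]
  exact Finset.sum_congr rfl fun j hj => by congr 1; omega

lemma sum_sub_reindex (f : ℕ → ℝ) (a t : ℕ) :
    ∑ s ∈ Finset.Icc a t, f (t - s) = ∑ u ∈ Finset.range (t + 1 - a), f u := by
  rw [← Finset.Ico_add_one_right_eq_Icc, Finset.sum_Ico_eq_sum_range, ← Finset.sum_range_reflect]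
  refine Finset.sum_congr rfl fun j hj => ?_
  have := Finset.mem_range.mp hj
  congr 1; omega

lemma range_succ_eq_insert (N : ℕ) : Finset.range (N+1) = insert 0 (Finset.Icc 1 N) := by
  ext x
  simp only [Finset.mem_range, Finset.mem_insert, Finset.mem_Icc]
  omega


section Sums

variable {U : ℕ → ℝ} (hUnn : ∀ t, 0 ≤ U t) (hUsum : Summable U) (hUlt : ∑' t, U t < 1)

include hUnn hUsum hUlt in
lemma res_partial_le (N : ℕ) :
    ∑ t ∈ Finset.range (N + 1), res U t ≤ (1 - ∑' t, U t)⁻¹ := by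
  have hRnn := res_nonneg U hUnn
  have hU0' : (0:ℝ) ≤ ∑' t, U t := tsum_nonneg hUnn
  have h1U : (0:ℝ) < 1 - ∑' t, U t := by linarith
  set S := ∑ t ∈ Finset.range (N + 1), res U t with hS
  have hSnn : 0 ≤ S := Finset.sum_nonneg fun i _ => hRnn i
  have key : S ≤ 1 + (∑' t, U t) * S := by
    have h1 : S = 1 + ∑ t ∈ Finset.Icc 1 N, res U t := by
      rw [hS, range_succ_eq_insert, Finset.sum_insert (by simp), res_zero]
    have h2 : ∑ t ∈ Finset.Icc 1 N, res U t
        = ∑ s ∈ Finset.Icc 1 N, U s * ∑ j ∈ Finset.range (N + 1 - s), res U j := by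
      calc ∑ t ∈ Finset.Icc 1 N, res U t
          = ∑ t ∈ Finset.Icc 1 N, ∑ s ∈ Finset.Icc 1 t, U s * res U (t - s) :=
            Finset.sum_congr rfl fun t ht => res_eq U (Finset.mem_Icc.mp ht).1
        _ = ∑ s ∈ Finset.Icc 1 N, ∑ t ∈ Finset.Icc s N, U s * res U (t - s) :=
            swap_tri (fun t s => U s * res U (t - s)) N
        _ = _ := Finset.sum_congr rfl fun s _ => by
              rw [← Finset.mul_sum, sum_shift (res U) s N]
    have h3 : ∑ s ∈ Finset.Icc 1 N, U s * ∑ j ∈ Finset.range (N + 1 - s), res U j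
        ≤ (∑' t, U t) * S := by
      calc ∑ s ∈ Finset.Icc 1 N, U s * ∑ j ∈ Finset.range (N + 1 - s), res U j
          ≤ ∑ s ∈ Finset.Icc 1 N, U s * S := by
            refine Finset.sum_le_sum fun s _ => ?_
            refine mul_le_mul_of_nonneg_left ?_ (hUnn s)
            exact Finset.sum_le_sum_of_subset_of_nonneg
              (Finset.range_subset_range.mpr (by omega)) (fun i _ _ => hRnn i)
        _ = (∑ s ∈ Finset.Icc 1 N, U s) * S := by rw [Finset.sum_mul]
        _ ≤ (∑' t, U t) * S := by
            refine mul_le_mul_of_nonneg_right ?_ hSnn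
            exact Summable.sum_le_tsum _ (fun i _ => hUnn i) hUsum
    linarith [h1, h2, h3]
  have h4 : S * (1 - ∑' t, U t) ≤ 1 := by nlinarith [key]
  have h5 := (le_div_iff₀ h1U).mpr h4
  rwa [one_div] at h5

include hUnn hUsum hUlt in
lemma res_summable : Summable (res U) := by
  have hRnn := res_nonneg U hUnn
  have hU0' : (0:ℝ) ≤ ∑' t, U t := tsum_nonneg hUnn
  have h1U : (0:ℝ) < 1 - ∑' t, U t := by linarith
  refine summable_of_sum_range_le (c := (1 - ∑' t, U t)⁻¹) hRnn fun n => ?_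
  rcases Nat.eq_zero_or_pos n with rfl | hn
  · simpa using (inv_nonneg.mpr h1U.le)
  · obtain ⟨m, rfl⟩ : ∃ m, n = m + 1 := ⟨n - 1, by omega⟩
    calc ∑ i ∈ Finset.range (m + 1), res U i ≤ _ := res_partial_le hUnn hUsum hUlt m

include hUnn hUsum hUlt in
lemma res_tsum (hU0 : U 0 = 0) : ∑' t, res U t = (1 - ∑' t, U t)⁻¹ := by
  have hRnn := res_nonneg U hUnn
  have hU0' : (0:ℝ) ≤ ∑' t, U t := tsum_nonneg hUnn
  have h1U : (0:ℝ) < 1 - ∑' t, U t := by linarith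
  have hsum : Summable (res U) := res_summable hUnn hUsum hUlt
  have hUn : Summable fun n => ‖U n‖ := by
    simpa [Real.norm_eq_abs, abs_of_nonneg (hUnn _)] using hUsum
  have hRn : Summable fun n => ‖res U n‖ := by
    simpa [Real.norm_eq_abs, abs_of_nonneg (hRnn _)] using hsum
  have hterm : ∀ n, ∑ k ∈ Finset.range (n+1), U k * res U (n - k)
      = if n = 0 then (0:ℝ) else res U n := by
    intro n
    rcases Nat.eq_zero_or_pos n with rfl | hn
    · simp [hU0]
    · rw [if_neg (by omega), range_succ_eq_insert, Finset.sum_insert (by simp), hU0,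
        res_eq U hn]
      ring
  have cauchy : (∑' n, U n) * ∑' n, res U n
      = ∑' n, (if n = 0 then (0:ℝ) else res U n) := by
    rw [tsum_mul_tsum_eq_tsum_sum_range_of_summable_norm hUn hRn]
    exact tsum_congr hterm
  set g : ℕ → ℝ := fun n => if n = 0 then (0:ℝ) else res U n with hgdef
  have hg1 : (fun n => g (n+1)) = fun n => res U (n+1) := by
    funext n; simp [hgdef]
  have hg : Summable g := by
    refine (summable_nat_add_iff 1).mp ?_
    rw [hg1]
    exact (summable_nat_add_iff 1).mpr hsum
  have e1 : ∑' n, g n = g 0 + ∑' n, g (n+1) := Summable.tsum_eq_zero_add hg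
  have e2 : ∑' n, res U n = res U 0 + ∑' n, res U (n+1) := Summable.tsum_eq_zero_add hsum
  have e3 : ∑' n, g (n+1) = ∑' n, res U (n+1) := by rw [hg1]
  have hg0 : g 0 = 0 := by simp [hgdef]
  have key : (∑' n, U n) * ∑' n, res U n = (∑' n, res U n) - 1 := by
    rw [cauchy, show tsum g = ∑' n, g n from rfl, e1, hg0, e3, zero_add, e2, res_zero]
    ring
  have hmul : (∑' t, res U t) * (1 - ∑' t, U t) = 1 := by nlinarith [key]
  have := (eq_div_iff (ne_of_gt h1U)).mpr hmul
  rwa [one_div] at this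

include hUnn hUsum hUlt in
set_option maxHeartbeats 1200000 in
lemma res_decay {ξU : ℝ} (hξU : 1 < ξU)
    (hUb : ∃ C : ℝ, ∀ t : ℕ, 1 ≤ t → U t ≤ C * (t:ℝ) ^ (-ξU)) :
    ∃ M : ℝ, 0 < M ∧ ∀ t : ℕ, 1 ≤ t → res U t ≤ M * (t:ℝ) ^ (-ξU) := by
  have hRnn := res_nonneg U hUnn
  have hξU0 : (0:ℝ) < ξU := by linarith
  obtain ⟨C, hC⟩ := hUb
  set CU := max C 1 with hCUdef
  have hCU1 : (1:ℝ) ≤ CU := le_max_right _ _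
  have hCU0 : (0:ℝ) < CU := by linarith
  have hCU : ∀ t : ℕ, 1 ≤ t → U t ≤ CU * (t:ℝ) ^ (-ξU) := fun t ht =>
    (hC t ht).trans (mul_le_mul_of_nonneg_right (le_max_left _ _)
      (Real.rpow_nonneg (Nat.cast_nonneg t) _))
  set Usum := ∑' t, U t with hUsumdef
  have hUsum0 : (0:ℝ) ≤ Usum := tsum_nonneg hUnn
  set θ : ℝ := (1 + Usum)/2 with hθdef
  have hθpos : 0 < θ := by rw [hθdef]; linarith
  have hθlt : θ < 1 := by rw [hθdef]; linarith
  have hUθ : Usum < θ := by rw [hθdef]; linarith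
  set r : ℝ := max (Usum/θ) (1/2) with hrdef
  have hr_lb : (1:ℝ)/2 ≤ r := le_max_right _ _
  have hr_pos : 0 < r := by linarith
  have hr_lt1 : r < 1 := by
    apply max_lt _ (by norm_num)
    exact (div_lt_one hθpos).mpr hUθ
  set x : ℝ := r ^ (ξU⁻¹) with hxdef
  have hx_pos : 0 < x := Real.rpow_pos_of_pos hr_pos _
  have hx_lt1 : x < 1 := Real.rpow_lt_one hr_pos.le hr_lt1 (by positivity)
  have hxpow : x ^ ξU = r := by
    rw [hxdef, ← Real.rpow_mul hr_pos.le, inv_mul_cancel₀ (ne_of_gt hξU0), Real.rpow_one]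
  have hA : x ^ (-ξU) * Usum ≤ θ := by
    rw [Real.rpow_neg hx_pos.le, hxpow]
    rw [inv_mul_le_iff₀ hr_pos]
    calc Usum = (Usum/θ) * θ := by field_simp
      _ ≤ r * θ := mul_le_mul_of_nonneg_right (le_max_left _ _) hθpos.le
  set ε : ℝ := 1 - x with hεdef
  have hε : 0 < ε := by rw [hεdef]; linarith
  have h1U : (0:ℝ) < 1 - Usum := by rw [hUsumdef]; linarith [hUlt]
  set Sb : ℝ := (1 - Usum)⁻¹ with hSbdef
  have hSb : 0 < Sb := by positivity
  set CB : ℝ := CU * ε ^ (-ξU) * Sb * 2 ^ ξU with hCBdef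
  have hCB : 0 < CB := by positivity
  set M : ℝ := max 1 (CB / (1 - θ)) with hMdef
  have hM1 : (1:ℝ) ≤ M := le_max_left _ _
  have hM0 : 0 < M := by linarith
  have hMCB : CB ≤ M * (1 - θ) := by
    rw [← div_le_iff₀ (by linarith : (0:ℝ) < 1 - θ)]
    exact le_max_right _ _
  have claim : ∀ t : ℕ, res U t ≤ M * ((t:ℝ) + 1) ^ (-ξU) := by
    intro t
    induction t using Nat.strong_induction_on with
    | _ t ih =>
      rcases Nat.eq_zero_or_pos t with rfl | ht
      · rw [res_zero]
        simp only [Nat.cast_zero, zero_add, Real.one_rpow, mul_one]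
        exact hM1
      have ht1 : (1:ℝ) ≤ (t:ℝ) := by exact_mod_cast ht
      have htpos : (0:ℝ) < (t:ℝ) := by linarith
      have hw_pos : (0:ℝ) < ((t:ℝ) + 1) ^ (-ξU) := Real.rpow_pos_of_pos (by linarith) _
      set w : ℝ := ((t:ℝ) + 1) ^ (-ξU) with hwdef
      set m' : ℕ := min (Nat.floor (ε * t)) t with hm'def
      have hm't : m' ≤ t := min_le_right _ _
      have hsp : ∑ s ∈ Finset.Icc 1 t, U s * res U (t - s)
          = ∑ s ∈ Finset.Icc 1 m', U s * res U (t - s)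
            + ∑ s ∈ Finset.Icc (m'+1) t, U s * res U (t - s) := by
        rw [← Finset.Ico_add_one_right_eq_Icc 1 t, ← Finset.Ico_add_one_right_eq_Icc 1 m', ← Finset.Ico_add_one_right_eq_Icc (m'+1) t,
          ← Finset.sum_Ico_consecutive _ (by omega : 1 ≤ m'+1) (by omega : m'+1 ≤ t+1)]
      have hxw_pos : (0:ℝ) < x * ((t:ℝ) + 1) := by positivity
      have hpartA : ∑ s ∈ Finset.Icc 1 m', U s * res U (t - s) ≤ M * θ * w := by
        have step : ∀ s ∈ Finset.Icc 1 m', U s * res U (t - s)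
            ≤ U s * (M * (x ^ (-ξU) * w)) := by
          intro s hs
          obtain ⟨hs1, hs2⟩ := Finset.mem_Icc.mp hs
          refine mul_le_mul_of_nonneg_left ?_ (hUnn s)
          have hst : s ≤ t := le_trans hs2 hm't
          have hIH := ih (t - s) (by omega)
          refine hIH.trans ?_
          have hcast : ((t - s : ℕ) : ℝ) = (t:ℝ) - s := by
            push_cast [Nat.cast_sub hst]; ring
          have hsle : (s:ℝ) ≤ ε * t := by
            have h1 : s ≤ Nat.floor (ε * t) := le_trans hs2 (min_le_left _ _)
            calc (s:ℝ) ≤ (Nat.floor (ε * t) : ℝ) := by exact_mod_cast h1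
              _ ≤ ε * t := Nat.floor_le (by positivity)
          have hlb : x * ((t:ℝ) + 1) ≤ ((t - s : ℕ) : ℝ) + 1 := by
            rw [hcast, show x = 1 - ε by rw [hεdef]; ring]
            nlinarith [hsle, hε]
          have := Real.rpow_le_rpow_of_nonpos hxw_pos hlb (by linarith : -ξU ≤ 0)
          rw [hwdef, ← Real.mul_rpow hx_pos.le (by linarith : (0:ℝ) ≤ (t:ℝ)+1)]
          exact mul_le_mul_of_nonneg_left this hM0.le
        calc ∑ s ∈ Finset.Icc 1 m', U s * res U (t - s)
            ≤ ∑ s ∈ Finset.Icc 1 m', U s * (M * (x ^ (-ξU) * w)) := Finset.sum_le_sum step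
          _ = (∑ s ∈ Finset.Icc 1 m', U s) * (M * (x ^ (-ξU) * w)) := by
              rw [Finset.sum_mul]
          _ ≤ Usum * (M * (x ^ (-ξU) * w)) := by
              refine mul_le_mul_of_nonneg_right ?_ (by positivity)
              exact Summable.sum_le_tsum _ (fun i _ => hUnn i) hUsum
          _ = (x ^ (-ξU) * Usum) * M * w := by ring
          _ ≤ θ * M * w := by
              refine mul_le_mul_of_nonneg_right (mul_le_mul_of_nonneg_right hA hM0.le) hw_pos.le
          _ = M * θ * w := by ring
      have hpartB : ∑ s ∈ Finset.Icc (m'+1) t, U s * res U (t - s) ≤ CB * w := by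
        have hεt : (0:ℝ) < ε * t := by positivity
        have step : ∀ s ∈ Finset.Icc (m'+1) t, U s * res U (t - s)
            ≤ (CU * (ε * t) ^ (-ξU)) * res U (t - s) := by
          intro s hs
          obtain ⟨hs1, hs2⟩ := Finset.mem_Icc.mp hs
          have hm'lt : m' < t := by omega
          have hfl : m' = Nat.floor (ε * t) := by
            rcases Nat.le_total (Nat.floor (ε * t)) t with h | h
            · rw [hm'def, min_eq_left h]
            · omega
          have hεs : ε * t ≤ (s:ℝ) := by
            have h2 : ε * t < (Nat.floor (ε * t) : ℝ) + 1 := Nat.lt_floor_add_one _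
            have h3 : Nat.floor (ε * t) + 1 ≤ s := by omega
            have h4 : ((Nat.floor (ε * t) : ℕ) : ℝ) + 1 ≤ (s:ℝ) := by exact_mod_cast h3
            linarith
          refine mul_le_mul_of_nonneg_right ?_ (hRnn _)
          calc U s ≤ CU * (s:ℝ) ^ (-ξU) := hCU s (by omega)
            _ ≤ CU * (ε * t) ^ (-ξU) := by
                refine mul_le_mul_of_nonneg_left ?_ hCU0.le
                exact Real.rpow_le_rpow_of_nonpos hεt hεs (by linarith)
        calc ∑ s ∈ Finset.Icc (m'+1) t, U s * res U (t - s)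
            ≤ ∑ s ∈ Finset.Icc (m'+1) t, (CU * (ε * t) ^ (-ξU)) * res U (t - s) :=
              Finset.sum_le_sum step
          _ = (CU * (ε * t) ^ (-ξU)) * ∑ s ∈ Finset.Icc (m'+1) t, res U (t - s) := by
              rw [Finset.mul_sum]
          _ ≤ (CU * (ε * t) ^ (-ξU)) * Sb := by
              refine mul_le_mul_of_nonneg_left ?_ (by positivity)
              rw [sum_sub_reindex (res U) (m'+1) t]
              calc ∑ u ∈ Finset.range (t + 1 - (m'+1)), res U u
                  ≤ ∑ u ∈ Finset.range (t + 1), res U u :=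
                    Finset.sum_le_sum_of_subset_of_nonneg
                      (Finset.range_subset_range.mpr (by omega)) (fun i _ _ => hRnn i)
                _ ≤ Sb := res_partial_le hUnn hUsum hUlt t
          _ ≤ CB * w := by
              rw [Real.mul_rpow hε.le htpos.le, hCBdef]
              have h2t : (t:ℝ) + 1 ≤ 2 * t := by linarith
              have hkey : (t:ℝ) ^ (-ξU) ≤ 2 ^ ξU * w := by
                have h5 : (2 * (t:ℝ)) ^ (-ξU) ≤ w := by
                  rw [hwdef]
                  exact Real.rpow_le_rpow_of_nonpos (by linarith) h2t (by linarith)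
                have h6 : (2 * (t:ℝ)) ^ (-ξU) = 2 ^ (-ξU) * (t:ℝ) ^ (-ξU) :=
                  Real.mul_rpow (by norm_num) htpos.le
                have h7 : (2:ℝ) ^ ξU * 2 ^ (-ξU) = 1 := by
                  rw [← Real.rpow_add (by norm_num : (0:ℝ) < 2)]
                  simp
                calc (t:ℝ) ^ (-ξU) = 2 ^ ξU * (2 ^ (-ξU) * (t:ℝ) ^ (-ξU)) := by
                      rw [← mul_assoc, h7, one_mul]
                  _ = 2 ^ ξU * (2 * (t:ℝ)) ^ (-ξU) := by rw [h6]
                  _ ≤ 2 ^ ξU * w := by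
                      refine mul_le_mul_of_nonneg_left h5 (by positivity)
              calc CU * (ε ^ (-ξU) * (t:ℝ) ^ (-ξU)) * Sb
                  ≤ CU * (ε ^ (-ξU) * (2 ^ ξU * w)) * Sb := by
                    refine mul_le_mul_of_nonneg_right
                      (mul_le_mul_of_nonneg_left
                        (mul_le_mul_of_nonneg_left hkey (by positivity)) hCU0.le) hSb.le
                _ = CU * ε ^ (-ξU) * Sb * 2 ^ ξU * w := by ring
      calc res U t = ∑ s ∈ Finset.Icc 1 t, U s * res U (t - s) := res_eq U ht
        _ = _ + _ := hsp
        _ ≤ M * θ * w + CB * w := add_le_add hpartA hpartB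
        _ ≤ M * θ * w + M * (1 - θ) * w := by
            refine add_le_add_right (mul_le_mul_of_nonneg_right hMCB hw_pos.le) _
        _ = M * w := by ring
  refine ⟨M, hM0, fun t ht => ?_⟩
  have htpos : (0:ℝ) < (t:ℝ) := by exact_mod_cast ht
  refine (claim t).trans (mul_le_mul_of_nonneg_left ?_ hM0.le)
  exact Real.rpow_le_rpow_of_nonpos htpos (by linarith) (by linarith)

end Sums



lemma ratio_rpow_le {r ξ : ℝ} (h1 : 1/2 ≤ r) (h2 : r ≤ 2) : r ^ ξ ≤ (2:ℝ) ^ |ξ| := by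
  rcases le_or_gt 0 ξ with hξ | hξ
  · rw [abs_of_nonneg hξ]
    exact Real.rpow_le_rpow (by linarith) h2 hξ
  · rw [abs_of_neg hξ]
    calc r ^ ξ ≤ ((1:ℝ)/2) ^ ξ :=
          Real.rpow_le_rpow_of_nonpos (by norm_num) h1 hξ.le
      _ = (2:ℝ) ^ (-ξ) := by
          rw [one_div, Real.inv_rpow (by norm_num), ← Real.rpow_neg (by norm_num)]

lemma sum_rpow_bound {ξV ξU : ℝ} (hξ : ξU > max ξV 1) :
    ∃ D p : ℝ, 0 < D ∧ 0 ≤ p ∧ p < ξU - ξV ∧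
      ∀ N : ℕ, 1 ≤ N → ∑ i ∈ Finset.range N, ((i:ℝ)+1) ^ (-ξV) ≤ D * (N:ℝ) ^ p := by
  have hξ1 : 1 < ξU := lt_of_le_of_lt (le_max_right _ _) hξ
  have hξV : ξV < ξU := lt_of_le_of_lt (le_max_left _ _) hξ
  rcases le_or_gt ξV 0 with h0 | h0
  · -- ξV ≤ 0
    refine ⟨1, 1 - ξV, one_pos, by linarith, by linarith, fun N hN => ?_⟩
    have hN0 : (0:ℝ) < N := by exact_mod_cast hN
    have : ∑ i ∈ Finset.range N, ((i:ℝ)+1) ^ (-ξV)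
        ≤ ∑ _i ∈ Finset.range N, (N:ℝ) ^ (-ξV) := by
      refine Finset.sum_le_sum fun i hi => ?_
      have hi' := Finset.mem_range.mp hi
      refine Real.rpow_le_rpow (by positivity) ?_ (by linarith)
      have : (i:ℝ) + 1 ≤ (N:ℝ) := by exact_mod_cast hi'
      linarith
    refine this.trans ?_
    rw [Finset.sum_const, Finset.card_range, nsmul_eq_mul, one_mul,
      show (1:ℝ) - ξV = 1 + (-ξV) by ring, Real.rpow_add hN0, Real.rpow_one]
  rcases le_or_gt ξV 1 with h1 | h1
  · -- 0 < ξV ≤ 1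
    set p : ℝ := ((1 - ξV) + (ξU - ξV))/2 with hpdef
    have hp0 : 0 < p := by rw [hpdef]; linarith
    have hp1 : 1 - ξV < p := by rw [hpdef]; linarith
    have hp2 : p < ξU - ξV := by rw [hpdef]; linarith
    refine ⟨1 + 1/p, p, by positivity, hp0.le, hp2, fun N hN => ?_⟩
    obtain ⟨K, rfl⟩ : ∃ K, N = K + 1 := ⟨N - 1, by omega⟩
    have hcast : ((K + 1 : ℕ) : ℝ) = 1 + (K:ℝ) := by push_cast; ring
    have h0mem : (0:ℝ) ∉ Set.uIcc (1:ℝ) (1 + K) := by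
      rw [Set.uIcc_of_le (by linarith [Nat.cast_nonneg (α := ℝ) K] : (1:ℝ) ≤ 1 + K)]
      intro h
      exact absurd h.1 (by norm_num)
    have hint1 : IntervalIntegrable (fun x : ℝ => x ^ (-ξV)) MeasureTheory.volume 1 (1 + K) :=
      intervalIntegral.intervalIntegrable_rpow (Or.inr h0mem)
    have hint2 : IntervalIntegrable (fun x : ℝ => x ^ (p - 1)) MeasureTheory.volume 1 (1 + K) :=
      intervalIntegral.intervalIntegrable_rpow (Or.inr h0mem)
    have hK0 : (0:ℝ) ≤ K := Nat.cast_nonneg K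
    have step1 : ∑ i ∈ Finset.range K, ((i:ℝ) + 1 + 1) ^ (-ξV)
        ≤ ∫ x in (1:ℝ)..(1 + K), x ^ (-ξV) := by
      have hf : AntitoneOn (fun x : ℝ => x ^ (-ξV)) (Set.Icc 1 (1 + (K:ℕ))) := by
        intro a ha b hb hab
        have ha1 : (1:ℝ) ≤ a := ha.1
        exact Real.rpow_le_rpow_of_nonpos (by linarith) hab (by linarith)
      have := hf.sum_le_integral
      refine le_trans (le_of_eq ?_) this
      refine Finset.sum_congr rfl fun i hi => ?_
      push_cast; ring_nf
    have step2 : (∫ x in (1:ℝ)..(1 + K), x ^ (-ξV))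
        ≤ ∫ x in (1:ℝ)..(1 + K), x ^ (p - 1) := by
      refine intervalIntegral.integral_mono_on (by linarith) hint1 hint2 fun x hx => ?_
      exact Real.rpow_le_rpow_of_exponent_le hx.1 (by linarith)
    have step3 : (∫ x in (1:ℝ)..(1 + K), x ^ (p - 1)) = ((1 + K:ℝ) ^ p - 1) / p := by
      rw [integral_rpow (Or.inl (by linarith : (-1:ℝ) < p - 1))]
      rw [show p - 1 + 1 = p by ring, Real.one_rpow]
    have hX1 : (1:ℝ) ≤ (1 + (K:ℝ)) ^ p :=
      Real.one_le_rpow (by linarith) hp0.le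
    calc ∑ i ∈ Finset.range (K + 1), ((i:ℝ)+1) ^ (-ξV)
        = ∑ i ∈ Finset.range K, ((i:ℝ) + 1 + 1) ^ (-ξV) + 1 := by
          rw [Finset.sum_range_succ']
          norm_num
      _ ≤ ((1 + K:ℝ) ^ p - 1) / p + 1 := by
          have := (step1.trans step2).trans_eq step3
          linarith
      _ ≤ (1 + 1/p) * ((K + 1 : ℕ) : ℝ) ^ p := by
          rw [hcast]
          have hd : ((1 + K:ℝ) ^ p - 1) / p ≤ (1 + K:ℝ) ^ p / p := by
            gcongr
            linarith
          have : (1 + (K:ℝ)) ^ p / p = (1/p) * (1 + K:ℝ) ^ p := by ring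
          nlinarith [hX1, hp0]
  · -- 1 < ξV
    have hsum : Summable (fun i : ℕ => ((i:ℝ)+1) ^ (-ξV)) := by
      have h := Real.summable_nat_rpow.mpr (show -ξV < -1 by linarith)
      have h2 := (summable_nat_add_iff 1).mpr h
      refine h2.congr fun i => ?_
      push_cast; ring_nf
    set D : ℝ := ∑' i : ℕ, ((i:ℝ)+1) ^ (-ξV) with hDdef
    have hD1 : (1:ℝ) ≤ D := by
      have := Summable.le_tsum hsum 0 (fun j _ => Real.rpow_nonneg (by positivity) _)
      simpa using this
    refine ⟨D, 0, by linarith, le_refl _, by linarith, fun N hN => ?_⟩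
    rw [Real.rpow_zero, mul_one]
    exact Summable.sum_le_tsum _ (fun i _ => Real.rpow_nonneg (by positivity) _) hsum

lemma L_repr (U V L : ℕ → ℝ) (hU0 : U 0 = 0)
    (hL : ∀ t, L t = (1/2) * V (t+1) + ∑ s ∈ Finset.Icc 1 t, U s * L (t - s)) :
    ∀ t, L t = (1/2) * ∑ s ∈ Finset.range (t+1), res U s * V (t - s + 1) := by
  intro t
  induction t using Nat.strong_induction_on with
  | _ t ih =>
    rw [hL t]
    have hIH : ∑ s ∈ Finset.Icc 1 t, U s * L (t - s)
        = ∑ s ∈ Finset.Icc 1 t,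
            U s * ((1/2) * ∑ j ∈ Finset.range (t - s + 1), res U j * V (t - s - j + 1)) :=
      Finset.sum_congr rfl fun s hs => by
        obtain ⟨h1, h2⟩ := Finset.mem_Icc.mp hs
        rw [ih (t - s) (by omega)]
    rw [hIH, range_succ_eq_insert t, Finset.sum_insert (by simp), res_zero, one_mul]
    have hmain : ∑ s ∈ Finset.Icc 1 t,
          U s * ∑ j ∈ Finset.range (t - s + 1), res U j * V (t - s - j + 1)
        = ∑ m ∈ Finset.Icc 1 t, res U m * V (t - m + 1) := by
      have hres : ∀ m ∈ Finset.Icc 1 t, res U m * V (t - m + 1)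
          = ∑ s ∈ Finset.Icc 1 m, U s * res U (m - s) * V (t - m + 1) := fun m hm => by
        rw [res_eq U (Finset.mem_Icc.mp hm).1, Finset.sum_mul]
      rw [Finset.sum_congr rfl hres,
        swap_tri (fun m s => U s * res U (m - s) * V (t - m + 1)) t]
      refine Finset.sum_congr rfl fun s hs => ?_
      obtain ⟨hs1, hs2⟩ := Finset.mem_Icc.mp hs
      rw [← Finset.Ico_add_one_right_eq_Icc s t, Finset.sum_Ico_eq_sum_range, Finset.mul_sum]
      refine (Finset.sum_congr (by congr 1; omega) fun j hj => ?_).symm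
      have hj' := Finset.mem_range.mp hj
      rw [show s + j - s = j by omega, show t - (s + j) = t - s - j by omega]
      ring
    have hhalf : ∑ s ∈ Finset.Icc 1 t,
          U s * ((1/2) * ∑ j ∈ Finset.range (t - s + 1), res U j * V (t - s - j + 1))
        = (1/2) * ∑ s ∈ Finset.Icc 1 t,
            U s * ∑ j ∈ Finset.range (t - s + 1), res U j * V (t - s - j + 1) := by
      rw [Finset.mul_sum]
      exact Finset.sum_congr rfl fun s _ => by ring
    rw [hhalf, hmain, Nat.sub_zero]
    ring

end Stmt12

open Stmt12 Filter Topology in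
set_option maxHeartbeats 1600000 in
/-- Signal-dominated regime: with `L` given by the propagator expansion (renewal
recursion `L_t = ½ V_{t+1} + Σ_{s=1}^t U_s L_{t−s}`), if `U_Σ < 1`, `U_t = O(t^{−ξ_U})`,
`V_t = C_V t^{−ξ_V}(1+o(1))` with `C_V > 0` and `ξ_U > max(ξ_V, 1)`, then
`L_t = (C_V / (2(1−U_Σ))) t^{−ξ_V} (1 + o(1))`. -/
theorem stmt_12 (U V L : ℕ → ℝ) (ξU ξV C_V : ℝ)
    (hU0 : U 0 = 0) (hUnn : ∀ t, 0 ≤ U t) (hVnn : ∀ t, 0 ≤ V t)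
    (hL : ∀ t, L t = (1 / 2) * V (t + 1) + ∑ s ∈ Finset.Icc 1 t, U s * L (t - s))
    (hUsum : Summable U) (hUlt : ∑' t, U t < 1)
    (hUb : ∃ C : ℝ, ∀ t : ℕ, 1 ≤ t → U t ≤ C * (t : ℝ) ^ (-ξU))
    (hCV : 0 < C_V)
    (hV : Filter.Tendsto (fun t : ℕ => V t * (t : ℝ) ^ ξV) Filter.atTop (nhds C_V))
    (hξ : ξU > max ξV 1) :
    Filter.Tendsto (fun t : ℕ => L t * (t : ℝ) ^ ξV) Filter.atTop
      (nhds (C_V / (2 * (1 - ∑' t, U t)))) := by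
  classical
  have hRnn := res_nonneg U hUnn
  have hRsum := res_summable hUnn hUsum hUlt
  have hRts := res_tsum hUnn hUsum hUlt hU0
  have hξ1 : 1 < ξU := lt_of_le_of_lt (le_max_right _ _) hξ
  have hξV : ξV < ξU := lt_of_le_of_lt (le_max_left _ _) hξ
  obtain ⟨MR, hMR0, hMR⟩ := res_decay hUnn hUsum hUlt hξ1 hUb
  obtain ⟨D, p, hD0, hp0, hpξ, hDp⟩ := sum_rpow_bound hξ
  obtain ⟨B0, hB0⟩ := hV.bddAbove_range
  set B : ℝ := max B0 1 with hBdef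
  have hB1 : (1:ℝ) ≤ B := le_max_right _ _
  have hBpos : (0:ℝ) < B := by linarith
  have hVb : ∀ u : ℕ, 1 ≤ u → V u ≤ B * (u:ℝ) ^ (-ξV) := by
    intro u hu
    have hu0 : (0:ℝ) < u := by exact_mod_cast hu
    have h2 : V u * (u:ℝ) ^ ξV ≤ B :=
      le_trans (hB0 (Set.mem_range_self u)) (le_max_left _ _)
    calc V u = (V u * (u:ℝ) ^ ξV) * (u:ℝ) ^ (-ξV) := by
          rw [mul_assoc, ← Real.rpow_add hu0]; simp
      _ ≤ B * (u:ℝ) ^ (-ξV) :=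
          mul_le_mul_of_nonneg_right h2 (Real.rpow_nonneg hu0.le _)
  have hUsnn : (0:ℝ) ≤ ∑' t, U t := tsum_nonneg hUnn
  have h1U : (0:ℝ) < 1 - ∑' t, U t := by linarith
  set f : ℕ → ℕ → ℝ := fun t s =>
    if 1 ≤ t ∧ s ≤ t / 2 then res U s * (V (t - s + 1) * (t:ℝ) ^ ξV) else 0 with hfdef
  set bound : ℕ → ℝ := fun s => res U s * (B * 2 ^ |ξV|) with hbdef
  have hbound_sum : Summable bound := hRsum.mul_right _
  have hdom : ∀ t s, |f t s| ≤ bound s := by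
    intro t s
    simp only [hfdef]
    by_cases h : 1 ≤ t ∧ s ≤ t / 2
    · obtain ⟨ht1, hs2⟩ := h
      rw [if_pos ⟨ht1, hs2⟩]
      have hfnn : 0 ≤ res U s * (V (t - s + 1) * (t:ℝ) ^ ξV) :=
        mul_nonneg (hRnn s) (mul_nonneg (hVnn _) (Real.rpow_nonneg (Nat.cast_nonneg t) _))
      rw [abs_of_nonneg hfnn, hbdef]
      refine mul_le_mul_of_nonneg_left ?_ (hRnn s)
      have hu1 : 1 ≤ t - s + 1 := by omega
      have hc0 : (0:ℝ) < ((t - s + 1 : ℕ) : ℝ) := by exact_mod_cast hu1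
      have ht0 : (0:ℝ) < (t:ℝ) := by exact_mod_cast ht1
      have hr1 : (1:ℝ)/2 ≤ (t:ℝ) / ((t - s + 1 : ℕ) : ℝ) := by
        rw [div_le_div_iff₀ (by norm_num) hc0]
        have : (t - s + 1 : ℕ) ≤ 2 * t := by omega
        have h' : ((t - s + 1 : ℕ) : ℝ) ≤ 2 * (t:ℝ) := by exact_mod_cast this
        linarith
      have hr2 : (t:ℝ) / ((t - s + 1 : ℕ) : ℝ) ≤ 2 := by
        rw [div_le_iff₀ hc0]
        have : t ≤ 2 * (t - s + 1) := by omega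
        have h' : (t:ℝ) ≤ 2 * ((t - s + 1 : ℕ) : ℝ) := by exact_mod_cast this
        linarith
      have hratio : ((t:ℝ) / ((t - s + 1 : ℕ) : ℝ)) ^ ξV ≤ 2 ^ |ξV| :=
        ratio_rpow_le hr1 hr2
      have hexp : ((t:ℝ) / ((t - s + 1 : ℕ) : ℝ)) ^ ξV
          = ((t - s + 1 : ℕ) : ℝ) ^ (-ξV) * (t:ℝ) ^ ξV := by
        rw [Real.div_rpow ht0.le hc0.le, Real.rpow_neg hc0.le]
        ring
      calc V (t - s + 1) * (t:ℝ) ^ ξV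
          ≤ (B * ((t - s + 1 : ℕ) : ℝ) ^ (-ξV)) * (t:ℝ) ^ ξV :=
            mul_le_mul_of_nonneg_right (hVb _ hu1) (Real.rpow_nonneg ht0.le _)
        _ = B * (((t:ℝ) / ((t - s + 1 : ℕ) : ℝ)) ^ ξV) := by rw [hexp]; ring
        _ ≤ B * 2 ^ |ξV| := mul_le_mul_of_nonneg_left hratio hBpos.le
    · rw [if_neg h, abs_zero, hbdef]
      exact mul_nonneg (hRnn s) (by positivity)
  have hab : ∀ s, Tendsto (fun t => f t s) atTop (𝓝 (res U s * C_V)) := by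
    intro s
    have h1 : Tendsto (fun t : ℕ => t - s + 1) atTop atTop :=
      tendsto_atTop_atTop.mpr fun b => ⟨b + s, fun a ha => by omega⟩
    have h2 : Tendsto (fun t : ℕ => V (t - s + 1) * ((t - s + 1 : ℕ) : ℝ) ^ ξV)
        atTop (𝓝 C_V) := hV.comp h1
    have hg : Tendsto (fun t : ℕ => ((t - s + 1 : ℕ) : ℝ) / (t:ℝ)) atTop (𝓝 1) := by
      have hbase : Tendsto (fun t : ℕ => 1 + ((1:ℝ) - s) / (t:ℝ)) atTop (𝓝 (1 + 0)) :=
        tendsto_const_nhds.add (tendsto_const_div_atTop_nhds_zero_nat _)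
      rw [add_zero] at hbase
      refine hbase.congr' ?_
      filter_upwards [eventually_ge_atTop (s + 1)] with t ht
      have hts : s ≤ t := by omega
      have ht0 : (0:ℝ) < (t:ℝ) := by exact_mod_cast (by omega : 0 < t)
      have hcast : ((t - s + 1 : ℕ) : ℝ) = (t:ℝ) - s + 1 := by
        push_cast [Nat.cast_sub hts]; ring
      rw [hcast]
      field_simp
      ring
    have h3 : Tendsto (fun t : ℕ => (t:ℝ) / ((t - s + 1 : ℕ) : ℝ)) atTop (𝓝 1) := by
      have := hg.inv₀ one_ne_zero
      rw [inv_one] at this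
      refine this.congr fun t => ?_
      rw [inv_div]
    have h4 : Tendsto (fun t : ℕ => ((t:ℝ) / ((t - s + 1 : ℕ) : ℝ)) ^ ξV) atTop (𝓝 1) := by
      have hc := (Real.continuousAt_rpow_const 1 ξV (Or.inl one_ne_zero)).tendsto
      have := hc.comp h3
      rwa [Real.one_rpow] at this
    have h5 : Tendsto (fun t : ℕ =>
        res U s * ((V (t - s + 1) * ((t - s + 1 : ℕ) : ℝ) ^ ξV)
          * ((t:ℝ) / ((t - s + 1 : ℕ) : ℝ)) ^ ξV)) atTop (𝓝 (res U s * (C_V * 1))) :=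
      (h2.mul h4).const_mul _
    rw [mul_one] at h5
    refine h5.congr' ?_
    filter_upwards [eventually_ge_atTop (2 * s + 2)] with t ht
    have ht1 : 1 ≤ t := by omega
    have hs2 : s ≤ t / 2 := by omega
    have hu1 : 1 ≤ t - s + 1 := by omega
    have hc0 : (0:ℝ) < ((t - s + 1 : ℕ) : ℝ) := by exact_mod_cast hu1
    have ht0 : (0:ℝ) < (t:ℝ) := by exact_mod_cast ht1
    have hexp : ((t:ℝ) / ((t - s + 1 : ℕ) : ℝ)) ^ ξV
        = ((t - s + 1 : ℕ) : ℝ) ^ (-ξV) * (t:ℝ) ^ ξV := by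
      rw [Real.div_rpow ht0.le hc0.le, Real.rpow_neg hc0.le]
      ring
    have hone : ((t - s + 1 : ℕ) : ℝ) ^ ξV * ((t - s + 1 : ℕ) : ℝ) ^ (-ξV) = 1 := by
      rw [← Real.rpow_add hc0]; simp
    simp only [hfdef]
    rw [if_pos (And.intro ht1 hs2), hexp]
    calc res U s * ((V (t - s + 1) * ((t - s + 1 : ℕ) : ℝ) ^ ξV)
          * (((t - s + 1 : ℕ) : ℝ) ^ (-ξV) * (t:ℝ) ^ ξV))
        = res U s * (V (t - s + 1) * (t:ℝ) ^ ξV)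
            * (((t - s + 1 : ℕ) : ℝ) ^ ξV * ((t - s + 1 : ℕ) : ℝ) ^ (-ξV)) := by ring
      _ = res U s * (V (t - s + 1) * (t:ℝ) ^ ξV) := by rw [hone, mul_one]
  have hmain : Tendsto (fun t => ∑' s, f t s) atTop (𝓝 (∑' s, res U s * C_V)) :=
    tendsto_tsum_of_dominated_convergence hbound_sum hab
      (Filter.Eventually.of_forall fun t s => by
        simpa [Real.norm_eq_abs] using hdom t s)
  have htsum_val : ∑' s, res U s * C_V = (1 - ∑' t, U t)⁻¹ * C_V := by
    rw [tsum_mul_right, hRts]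
  set tail : ℕ → ℝ := fun t =>
    ∑ s ∈ Finset.Ico (t/2+1) (t+1), res U s * (V (t - s + 1) * (t:ℝ) ^ ξV) with htaildef
  have htail0 : ∀ t, 0 ≤ tail t := fun t =>
    Finset.sum_nonneg fun s _ => mul_nonneg (hRnn s)
      (mul_nonneg (hVnn _) (Real.rpow_nonneg (Nat.cast_nonneg t) _))
  set K : ℝ := MR * B * D * 2 ^ ξU * 2 ^ p with hKdef
  have htailb : ∀ t : ℕ, 1 ≤ t → tail t ≤ K * (t:ℝ) ^ (ξV - ξU + p) := by
    intro t ht1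
    have ht0 : (0:ℝ) < (t:ℝ) := by exact_mod_cast ht1
    have ht1' : (1:ℝ) ≤ (t:ℝ) := by exact_mod_cast ht1
    have ht20 : (0:ℝ) < (t:ℝ)/2 := by linarith
    have step : ∀ s ∈ Finset.Ico (t/2+1) (t+1),
        res U s * (V (t - s + 1) * (t:ℝ) ^ ξV)
          ≤ (MR * ((t:ℝ)/2) ^ (-ξU) * B * (t:ℝ) ^ ξV) * ((t - s + 1 : ℕ) : ℝ) ^ (-ξV) := by
      intro s hs
      obtain ⟨hs1, hs2⟩ := Finset.mem_Ico.mp hs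
      have hs1' : 1 ≤ s := by omega
      have hst : s ≤ t := by omega
      have hscast : (t:ℝ)/2 ≤ (s:ℝ) := by
        have : t ≤ 2 * s := by omega
        have h' : (t:ℝ) ≤ 2 * (s:ℝ) := by exact_mod_cast this
        linarith
      have hres : res U s ≤ MR * ((t:ℝ)/2) ^ (-ξU) := by
        refine (hMR s hs1').trans ?_
        refine mul_le_mul_of_nonneg_left ?_ hMR0.le
        exact Real.rpow_le_rpow_of_nonpos ht20 hscast (by linarith)
      have hu1 : 1 ≤ t - s + 1 := by omega
      have hVle : V (t - s + 1) * (t:ℝ) ^ ξV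
          ≤ (B * ((t - s + 1 : ℕ) : ℝ) ^ (-ξV)) * (t:ℝ) ^ ξV :=
        mul_le_mul_of_nonneg_right (hVb _ hu1) (Real.rpow_nonneg ht0.le _)
      calc res U s * (V (t - s + 1) * (t:ℝ) ^ ξV)
          ≤ (MR * ((t:ℝ)/2) ^ (-ξU)) * ((B * ((t - s + 1 : ℕ) : ℝ) ^ (-ξV)) * (t:ℝ) ^ ξV) := by
            refine mul_le_mul hres hVle ?_ ?_
            · exact mul_nonneg (hVnn _) (Real.rpow_nonneg ht0.le _)
            · positivity
        _ = (MR * ((t:ℝ)/2) ^ (-ξU) * B * (t:ℝ) ^ ξV) * ((t - s + 1 : ℕ) : ℝ) ^ (-ξV) := by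
            ring
    have hsum1 : ∑ s ∈ Finset.Ico (t/2+1) (t+1), ((t - s + 1 : ℕ) : ℝ) ^ (-ξV)
        ≤ D * ((t + 1 : ℕ) : ℝ) ^ p := by
      have hsub : ∑ s ∈ Finset.Ico (t/2+1) (t+1), ((t - s + 1 : ℕ) : ℝ) ^ (-ξV)
          ≤ ∑ s ∈ Finset.range (t+1), ((t - s + 1 : ℕ) : ℝ) ^ (-ξV) := by
        refine Finset.sum_le_sum_of_subset_of_nonneg ?_
          (fun i _ _ => Real.rpow_nonneg (Nat.cast_nonneg _) _)
        intro x hx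
        obtain ⟨h1, h2⟩ := Finset.mem_Ico.mp hx
        exact Finset.mem_range.mpr h2
      have hrefl : ∑ s ∈ Finset.range (t+1), ((t - s + 1 : ℕ) : ℝ) ^ (-ξV)
          = ∑ i ∈ Finset.range (t+1), ((i:ℝ) + 1) ^ (-ξV) := by
        rw [← Finset.sum_range_reflect (fun i => ((i:ℝ) + 1) ^ (-ξV)) (t+1)]
        refine Finset.sum_congr rfl fun j hj => ?_
        have hj' := Finset.mem_range.mp hj
        congr 1
        rw [show t + 1 - 1 - j = t - j from by omega]
        push_cast [Nat.cast_sub (show j ≤ t by omega)]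
        ring
      refine hsub.trans (hrefl.trans_le ?_)
      exact hDp (t+1) (by omega)
    have hfactor : tail t ≤ (MR * ((t:ℝ)/2) ^ (-ξU) * B * (t:ℝ) ^ ξV)
        * (D * ((t + 1 : ℕ) : ℝ) ^ p) := by
      calc tail t ≤ ∑ s ∈ Finset.Ico (t/2+1) (t+1),
            (MR * ((t:ℝ)/2) ^ (-ξU) * B * (t:ℝ) ^ ξV) * ((t - s + 1 : ℕ) : ℝ) ^ (-ξV) :=
            Finset.sum_le_sum step
        _ = (MR * ((t:ℝ)/2) ^ (-ξU) * B * (t:ℝ) ^ ξV)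
            * ∑ s ∈ Finset.Ico (t/2+1) (t+1), ((t - s + 1 : ℕ) : ℝ) ^ (-ξV) := by
            rw [Finset.mul_sum]
        _ ≤ _ := by
            refine mul_le_mul_of_nonneg_left hsum1 ?_
            positivity
    have hhalf : ((t:ℝ)/2) ^ (-ξU) = (t:ℝ) ^ (-ξU) * 2 ^ ξU := by
      rw [Real.div_rpow ht0.le (by norm_num), Real.rpow_neg (by norm_num : (0:ℝ) ≤ 2)]
      field_simp
    have hp1 : ((t + 1 : ℕ) : ℝ) ^ p ≤ 2 ^ p * (t:ℝ) ^ p := by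
      have h2t : ((t + 1 : ℕ) : ℝ) ≤ 2 * (t:ℝ) := by
        push_cast; linarith
      calc ((t + 1 : ℕ) : ℝ) ^ p ≤ (2 * (t:ℝ)) ^ p :=
            Real.rpow_le_rpow (Nat.cast_nonneg _) h2t hp0
        _ = 2 ^ p * (t:ℝ) ^ p := Real.mul_rpow (by norm_num) ht0.le
    have hcomb : (t:ℝ) ^ ξV * (t:ℝ) ^ (-ξU) * (t:ℝ) ^ p = (t:ℝ) ^ (ξV - ξU + p) := by
      rw [← Real.rpow_add ht0, ← Real.rpow_add ht0]
      ring_nf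
    calc tail t ≤ (MR * ((t:ℝ)/2) ^ (-ξU) * B * (t:ℝ) ^ ξV)
          * (D * ((t + 1 : ℕ) : ℝ) ^ p) := hfactor
      _ ≤ (MR * ((t:ℝ) ^ (-ξU) * 2 ^ ξU) * B * (t:ℝ) ^ ξV) * (D * (2 ^ p * (t:ℝ) ^ p)) := by
          rw [hhalf]
          refine mul_le_mul_of_nonneg_left (mul_le_mul_of_nonneg_left hp1 hD0.le) ?_
          positivity
      _ = K * ((t:ℝ) ^ ξV * (t:ℝ) ^ (-ξU) * (t:ℝ) ^ p) := by rw [hKdef]; ring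
      _ = K * (t:ℝ) ^ (ξV - ξU + p) := by rw [hcomb]
  have hexpneg : ξV - ξU + p < 0 := by linarith
  have hKpos : 0 < K := by rw [hKdef]; positivity
  have htailto : Tendsto tail atTop (𝓝 0) := by
    have hto : Tendsto (fun t : ℕ => K * (t:ℝ) ^ (ξV - ξU + p)) atTop (𝓝 (K * 0)) := by
      refine Tendsto.const_mul K ?_
      have hcomp := (tendsto_rpow_neg_atTop (by linarith : 0 < -(ξV - ξU + p))).comp
        (tendsto_natCast_atTop_atTop (R := ℝ))
      simpa [Function.comp_def, neg_neg] using hcomp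
    rw [mul_zero] at hto
    refine squeeze_zero' (Filter.Eventually.of_forall htail0) ?_ hto
    filter_upwards [eventually_ge_atTop 1] with t ht
    exact htailb t ht
  have heq : (fun t : ℕ => (1/2 : ℝ) * (∑' s, f t s) + (1/2) * tail t)
      =ᶠ[atTop] fun t : ℕ => L t * (t:ℝ) ^ ξV := by
    filter_upwards [eventually_ge_atTop 1] with t ht1
    have hLt := L_repr U V L hU0 hL t
    have hvan : ∀ s ∉ Finset.range (t/2+1), f t s = 0 := by
      intro s hs
      have hs' : ¬ (s ≤ t / 2) := fun h => hs (Finset.mem_range.mpr (by omega))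
      simp only [hfdef]
      exact if_neg (by tauto)
    have htsum_fin : ∑' s, f t s
        = ∑ s ∈ Finset.range (t/2+1), res U s * (V (t - s + 1) * (t:ℝ) ^ ξV) := by
      rw [tsum_eq_sum hvan]
      refine Finset.sum_congr rfl fun s hs => ?_
      have hs' := Finset.mem_range.mp hs
      simp only [hfdef]
      exact if_pos ⟨ht1, by omega⟩
    have hsplit : ∑ s ∈ Finset.range (t+1), res U s * (V (t - s + 1) * (t:ℝ) ^ ξV)
        = ∑ s ∈ Finset.range (t/2+1), res U s * (V (t - s + 1) * (t:ℝ) ^ ξV)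
          + ∑ s ∈ Finset.Ico (t/2+1) (t+1), res U s * (V (t - s + 1) * (t:ℝ) ^ ξV) := by
      simp only [Finset.range_eq_Ico]
      rw [← Finset.sum_Ico_consecutive _ (Nat.zero_le (t/2+1)) (by omega : t/2+1 ≤ t+1)]
    have hexpand : L t * (t:ℝ) ^ ξV
        = (1/2) * ∑ s ∈ Finset.range (t+1), res U s * (V (t - s + 1) * (t:ℝ) ^ ξV) := by
      rw [hLt, mul_assoc, Finset.sum_mul]
      exact congrArg (fun z => (1/2 : ℝ) * z) (Finset.sum_congr rfl fun s _ => by ring)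
    rw [htsum_fin, hexpand, hsplit]
    simp only [htaildef]
    ring
  have hfin : Tendsto (fun t : ℕ => (1/2 : ℝ) * (∑' s, f t s) + (1/2) * tail t) atTop
      (𝓝 ((1/2) * ((1 - ∑' t, U t)⁻¹ * C_V) + (1/2) * 0)) := by
    rw [← htsum_val]
    exact (hmain.const_mul _).add (htailto.const_mul _)
  have hval : (1/2 : ℝ) * ((1 - ∑' t, U t)⁻¹ * C_V) + (1/2) * 0
      = C_V / (2 * (1 - ∑' t, U t)) := by
    rw [mul_zero, add_zero]
    field_simp
  rw [hval] at hfin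
  exact hfin.congr' heq
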